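/- Fix a positive integer P, complex gains g_1, …, g_P ∈ ℂ, and angles θ_1, …, θ_P and ψ_1, …, ψ_P in ℝ such that for all n ≠ m, sin θ_n − sin θ_m is not an even integer and sin ψ_n − sin ψ_m is not an even integer. For each positive integer N define the channel matrix H_N = (N/√P)·∑_{n=1}^{P} g_n · a_N(θ_n) a_N(ψ_n)^* ∈ ℂ^{N×N}. Then for each m ∈ {1,…,P}, (1/N)·a_N(θ_m)^* H_N a_N(ψ_m) → g_m/√P as N → ∞. (Asymptotic version of Lemma 2 for the multipath channel model of Equation (1) with N_BS = N_UE = N: beamforming matched to path m asymptotically extracts exactly the gain of path m.) -/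

import Mathlib

open Filter Matrix

/-- The ULA steering vector `a_N(θ) ∈ ℂ^N`, with `n`-th entry
`(1/√N)·exp(−i·π·n·sin θ)`. -/
noncomputable def steering (N : ℕ) (θ : ℝ) : EuclideanSpace ℂ (Fin N) :=
  WithLp.toLp 2 fun n : Fin N => (1 / Real.sqrt N : ℝ) *
    Complex.exp (-(Complex.I * Real.pi * n * Real.sin θ))

/-- The sesquilinear quantity `w^* H z`. -/
noncomputable def quadForm {M N : ℕ} (w : EuclideanSpace ℂ (Fin M))
    (H : Matrix (Fin M) (Fin N) ℂ) (z : EuclideanSpace ℂ (Fin N)) : ℂ :=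
  dotProduct (star (w : Fin M → ℂ)) (H.mulVec (z : Fin N → ℂ))

/-- The multipath channel `H_N = (N/√P)·∑_n g_n · a_N(θ_n) a_N(ψ_n)^*`. -/
noncomputable def channel (P : ℕ) (g : Fin P → ℂ) (θ ψ : Fin P → ℝ) (N : ℕ) :
    Matrix (Fin N) (Fin N) ℂ :=
  ((N : ℂ) / (Real.sqrt P : ℂ)) •
    ∑ n : Fin P, g n •
      Matrix.vecMulVec (steering N (θ n))
        (fun l => (starRingEnd ℂ) (steering N (ψ n) l))

/-- The inner product `a_N(a)^* a_N(b)`. -/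
noncomputable def Sdot (N : ℕ) (a b : ℝ) : ℂ :=
  ∑ k : Fin N, (starRingEnd ℂ) (steering N a k) * steering N b k

lemma Sdot_eq (N : ℕ) (a b : ℝ) :
    Sdot N a b = (1 / N : ℂ) *
      ∑ k ∈ Finset.range N,
        (Complex.exp (-(Complex.I * Real.pi * (Real.sin b - Real.sin a))))^k := by
  rw [Sdot, Finset.mul_sum, ← Fin.sum_univ_eq_sum_range]
  refine Finset.sum_congr rfl fun k _ => ?_
  simp only [steering, _root_.map_mul, ← Complex.exp_nat_mul, ← Complex.exp_conj,
    Complex.conj_ofReal]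
  have h2 : (((1 / Real.sqrt N : ℝ) : ℂ)) * (((1 / Real.sqrt N : ℝ) : ℂ)) = (1 / N : ℂ) := by
    rw [← Complex.ofReal_mul,
      show (1/Real.sqrt N) * (1/Real.sqrt N) = 1 / (Real.sqrt N * Real.sqrt N) by ring,
      Real.mul_self_sqrt (Nat.cast_nonneg N)]
    push_cast; rfl
  have h3 : (starRingEnd ℂ) (-(Complex.I * (Real.pi:ℂ) * ((k:ℕ):ℂ) * (Real.sin a : ℂ))) =
      Complex.I * Real.pi * k * Real.sin a := by
    simp only [map_neg, _root_.map_mul, Complex.conj_I, Complex.conj_ofReal, map_natCast]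
    ring
  rw [h3, mul_mul_mul_comm, h2, ← Complex.exp_add]
  congr 1
  ring

lemma norm_r_one (d e : ℝ) :
    ‖Complex.exp (-(Complex.I * Real.pi * ((d:ℂ) - (e:ℂ))))‖ = 1 := by
  rw [Complex.norm_exp]
  have : (-(Complex.I * Real.pi * ((d:ℂ) - (e:ℂ)))).re = 0 := by simp
  rw [this, Real.exp_zero]

lemma Sdot_self (N : ℕ) (hN : 1 ≤ N) (a : ℝ) : Sdot N a a = 1 := by
  rw [Sdot_eq]
  simp only [sub_self, Complex.ofReal_zero, mul_zero, neg_zero, Complex.exp_zero, one_pow,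
    Finset.sum_const, Finset.card_range, nsmul_eq_mul, mul_one]
  rw [one_div, inv_mul_cancel₀]
  exact Nat.cast_ne_zero.mpr (by omega)

lemma Sdot_norm_le_one (N : ℕ) (a b : ℝ) : ‖Sdot N a b‖ ≤ 1 := by
  rw [Sdot_eq]
  rcases Nat.eq_zero_or_pos N with h | h
  · subst h; simp
  calc ‖(1 / N : ℂ) * _‖ ≤ (1/N : ℝ) * ∑ k ∈ Finset.range N,
        ‖(Complex.exp (-(Complex.I * Real.pi * (Real.sin b - Real.sin a))))^k‖ := by
        rw [norm_mul]
        gcongr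
        · simp
        · exact norm_sum_le _ _
    _ = 1 := by
        simp only [norm_pow, norm_r_one (Real.sin b) (Real.sin a), one_pow,
          Finset.sum_const, Finset.card_range,
          nsmul_eq_mul, mul_one, one_div]
        exact inv_mul_cancel₀ (Nat.cast_ne_zero.mpr h.ne')

lemma r_ne_one (d e : ℝ) (h : ∀ k : ℤ, d - e ≠ 2 * k) :
    Complex.exp (-(Complex.I * Real.pi * ((d:ℂ) - (e:ℂ)))) ≠ 1 := by
  intro hc
  rw [Complex.exp_eq_one_iff] at hc
  obtain ⟨n, hn⟩ := hc
  apply h (-n)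
  have hIpi : (Complex.I * (Real.pi:ℂ)) ≠ 0 :=
    mul_ne_zero Complex.I_ne_zero (Complex.ofReal_ne_zero.mpr Real.pi_ne_zero)
  have heq : Complex.I * (Real.pi:ℂ) * (-((d:ℂ) - e)) =
      Complex.I * (Real.pi:ℂ) * (2 * n) := by linear_combination hn
  have h2 := mul_left_cancel₀ hIpi heq
  have key : (d - e : ℝ) = ((2 * (-n : ℤ) : ℤ) : ℝ) := by
    have : ((d - e : ℝ) : ℂ) = ((2 * (-n : ℤ) : ℤ) : ℂ) := by
      push_cast at h2 ⊢; linear_combination -h2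
    exact_mod_cast this
  rw [key]; push_cast; ring

lemma Sdot_tendsto_zero (a b : ℝ) (h : ∀ k : ℤ, Real.sin b - Real.sin a ≠ 2 * k) :
    Tendsto (fun N => Sdot N a b) atTop (nhds 0) := by
  set r := Complex.exp (-(Complex.I * Real.pi * (Real.sin b - Real.sin a))) with hr
  have hr1 : r ≠ 1 := r_ne_one _ _ h
  have hden : (0:ℝ) < ‖r - 1‖ := by
    simpa [norm_pos_iff, sub_eq_zero] using hr1
  refine squeeze_zero_norm (a := fun N : ℕ => 2 / ‖r - 1‖ / (N:ℝ)) ?_ ?_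
  · intro N
    rw [Sdot_eq, ← hr, norm_mul]
    have h1 : ‖(1/(N:ℂ))‖ = 1/(N:ℝ) := by simp
    have h2 : ‖∑ k ∈ Finset.range N, r ^ k‖ ≤ 2 / ‖r - 1‖ := by
      rw [geom_sum_eq hr1, norm_div]
      gcongr
      calc ‖r ^ N - 1‖ ≤ ‖r ^ N‖ + ‖(1:ℂ)‖ := norm_sub_le _ _
        _ = 2 := by rw [norm_pow, hr, norm_r_one]; norm_num
    rw [h1]
    calc (1/(N:ℝ)) * ‖∑ k ∈ Finset.range N, r ^ k‖ ≤ (1/(N:ℝ)) * (2 / ‖r - 1‖) := by gcongr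
      _ = 2 / ‖r - 1‖ / N := by ring
  · exact tendsto_const_div_atTop_nhds_zero_nat _

lemma quad_eq (P N : ℕ) (g : Fin P → ℂ) (θ ψ : Fin P → ℝ) (m : Fin P) :
    quadForm (steering N (θ m)) (channel P g θ ψ N) (steering N (ψ m)) =
      ((N : ℂ) / (Real.sqrt P : ℂ)) *
        ∑ n : Fin P, g n * Sdot N (θ m) (θ n) * Sdot N (ψ n) (ψ m) := by
  simp only [quadForm, channel, Sdot, Matrix.mulVec, dotProduct, Matrix.smul_apply,
    Matrix.sum_apply, Matrix.vecMulVec_apply, Pi.star_apply, smul_eq_mul, starRingEnd_apply,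
    Finset.sum_mul, Finset.mul_sum]
  refine Eq.trans (Finset.sum_congr rfl fun k _ => Finset.sum_comm) ?_
  rw [Finset.sum_comm]
  refine Finset.sum_congr rfl fun n _ => ?_
  rw [Finset.sum_comm]
  refine Finset.sum_congr rfl fun k _ => ?_
  refine Finset.sum_congr rfl fun l _ => ?_
  simp only [RCLike.star_def]
  ring

/-- Beamforming matched to path `m` asymptotically extracts exactly the gain
of path `m`: `(1/N)·a_N(θ_m)^* H_N a_N(ψ_m) → g_m/√P`. -/
theorem stmt13 {P : ℕ} (hP : 0 < P) (g : Fin P → ℂ) (θ ψ : Fin P → ℝ)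
    (hθ : ∀ n m : Fin P, n ≠ m →
      ∀ k : ℤ, Real.sin (θ n) - Real.sin (θ m) ≠ 2 * k)
    (hψ : ∀ n m : Fin P, n ≠ m →
      ∀ k : ℤ, Real.sin (ψ n) - Real.sin (ψ m) ≠ 2 * k) :
    ∀ m : Fin P,
      Tendsto
        (fun N : ℕ => (1 / (N : ℂ)) *
          quadForm (steering N (θ m)) (channel P g θ ψ N) (steering N (ψ m)))
        atTop (nhds (g m / (Real.sqrt P : ℂ))) := by
  intro m
  have hPs : ((Real.sqrt P : ℝ) : ℂ) ≠ 0 := by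
    rw [Complex.ofReal_ne_zero]
    exact (Real.sqrt_pos.mpr (by exact_mod_cast hP)).ne'
  -- the limit of each summand
  set T : Fin P → ℕ → ℂ :=
    fun n N => g n * Sdot N (θ m) (θ n) * Sdot N (ψ n) (ψ m) with hT
  have hsum : Tendsto (fun N => ∑ n : Fin P, T n N) atTop
      (nhds (∑ n : Fin P, if n = m then g m else 0)) := by
    refine tendsto_finset_sum _ fun n _ => ?_
    by_cases hnm : n = m
    · subst hnm
      simp only [if_pos rfl]
      refine Tendsto.congr' ?_ tendsto_const_nhds
      filter_upwards [eventually_ge_atTop 1] with N hN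
      rw [hT]
      simp [Sdot_self N hN]
    · simp only [if_neg hnm]
      refine squeeze_zero_norm (a := fun N : ℕ => ‖g n‖ * ‖Sdot N (θ m) (θ n)‖) ?_ ?_
      · intro N
        rw [hT]
        simp only [norm_mul]
        calc ‖g n‖ * ‖Sdot N (θ m) (θ n)‖ * ‖Sdot N (ψ n) (ψ m)‖
            ≤ ‖g n‖ * ‖Sdot N (θ m) (θ n)‖ * 1 := by
              gcongr
              exact Sdot_norm_le_one _ _ _
          _ = ‖g n‖ * ‖Sdot N (θ m) (θ n)‖ := mul_one _
      · have := ((Sdot_tendsto_zero (θ m) (θ n) (hθ n m hnm)).norm).const_mul ‖g n‖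
        simpa using this
  have hsum' : (∑ n : Fin P, if n = m then g m else 0) = g m := by
    rw [Finset.sum_ite_eq' Finset.univ m (fun _ => g m)]
    simp
  rw [hsum'] at hsum
  have hfinal := hsum.const_mul (((Real.sqrt P : ℝ) : ℂ))⁻¹
  rw [show (((Real.sqrt P : ℝ) : ℂ))⁻¹ * g m = g m / (Real.sqrt P : ℂ) by
    rw [div_eq_mul_inv, mul_comm]] at hfinal
  refine Tendsto.congr' ?_ hfinal
  filter_upwards [eventually_ge_atTop 1] with N hN
  have hN0 : ((N:ℕ):ℂ) ≠ 0 := Nat.cast_ne_zero.mpr (by omega)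
  rw [quad_eq]
  field_simp
  rfl
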